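/- Lower bound from α*: Let T be a tournament, S a set of demand arcs in which every vertex has at most one demand in-neighbor, F a feedback arc set of T, g : V(F) → {0,...,log n} a function, and define α*_g(v) = g(v) for v ∈ V(F), and otherwise α*_g(v) is the minimum natural number such that (1) α*_g(v) > α*_g(w) for every demand arc (v,w) ∈ S, and (2) α*_g(v) ≠ α*_g(w) whenever some u satisfies (u,v), (u,w) ∈ S and (w is weaker than v or w ∈ V(F)). If H is a spanning binomial arborescence of T containing all arcs of S such that α_H(x) = α*_g(x) for every x in Lose(S) ∩ V(H), then α_H(v) ≥ α*_g(v) for every vertex v of H. -/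

import Mathlib

universe u

variable {V : Type*} [DecidableEq V]

/-- A binomial arborescence over relation `A`, recorded with its vertex set,
its arc set, its root and its height. -/
inductive IsBAE (A : V → V → Prop) : Finset V → Finset (V × V) → V → ℕ → Prop
  | single (a : V) : IsBAE A {a} ∅ a 0
  | join {s t : Finset V} {E F : Finset (V × V)} {a b : V} {i : ℕ} :
      IsBAE A s E a i → IsBAE A t F b i → Disjoint s t → A a b →
      IsBAE A (s ∪ t) (insert (a, b) (E ∪ F)) a (i + 1)

/-- Classical filter on a finset (no decidability assumptions needed). -/
noncomputable def cfilter {α : Type*} (p : α → Prop) (s : Finset α) : Finset α :=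
  @Finset.filter _ p (fun _ => Classical.dec _) s

/-- The descendants (inside ambient vertex set `s`) of `x` in the digraph with arc set `E`:
vertices reachable from `x`, including `x` itself (when `x ∈ s`). -/
noncomputable def desc (s : Finset V) (E : Finset (V × V)) (x : V) : Finset V :=
  cfilter (fun y => Relation.ReflTransGen (fun a b => (a, b) ∈ E) x y) s

/-- The height `α_H(x)` of a vertex: log base 2 of its number of descendants. -/
noncomputable def hgt (s : Finset V) (E : Finset (V × V)) (x : V) : ℕ :=
  Nat.log 2 (desc s E x).card

/-- The arcs of `E` lying within the subtree of descendants of `x`. -/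
noncomputable def subArcs (s : Finset V) (E : Finset (V × V)) (x : V) : Finset (V × V) :=
  cfilter (fun e => e.1 ∈ desc s E x ∧ e.2 ∈ desc s E x) E

lemma mem_desc' {s : Finset V} {E : Finset (V × V)} {x y : V} :
    y ∈ desc s E x ↔ y ∈ s ∧ Relation.ReflTransGen (fun a b => (a, b) ∈ E) x y := by
  simp [desc, cfilter, Finset.mem_filter]

lemma bae_facts {A : V → V → Prop} {s : Finset V} {E : Finset (V × V)} {a : V} {i : ℕ}
    (h : IsBAE A s E a i) :
    a ∈ s ∧ (∀ e ∈ E, e.1 ∈ s ∧ e.2 ∈ s) ∧ (∀ e ∈ E, e.2 ≠ a) ∧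
    desc s E a = s ∧ s.card = 2 ^ i ∧ (∀ e ∈ E, hgt s E e.2 < hgt s E e.1) := by
  induction h with
  | single a =>
    refine ⟨Finset.mem_singleton_self a, by simp, by simp, ?_, by simp, by simp⟩
    ext y
    simp only [mem_desc', Finset.mem_singleton]
    constructor
    · rintro ⟨h1, -⟩; exact h1
    · rintro rfl; exact ⟨rfl, Relation.ReflTransGen.refl⟩
  | @join s t E F a b i h1 h2 hdisj hab ih1 ih2 =>
    obtain ⟨ha, harcE, hheadE, hdescE, hcardE, hltE⟩ := ih1
    obtain ⟨hb, harcF, hheadF, hdescF, hcardF, hltF⟩ := ih2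
    have hanot : a ∉ t := fun hx => (Finset.disjoint_left.mp hdisj ha) hx
    have hbnot : b ∉ s := fun hx => (Finset.disjoint_left.mp hdisj hx) hb
    set Eu : Finset (V × V) := insert (a, b) (E ∪ F) with hEu
    -- arcs within s ∪ t
    have harcU : ∀ e ∈ Eu, e.1 ∈ s ∪ t ∧ e.2 ∈ s ∪ t := by
      intro e he
      rcases Finset.mem_insert.mp he with rfl | he
      · exact ⟨Finset.mem_union_left _ ha, Finset.mem_union_right _ hb⟩
      · rcases Finset.mem_union.mp he with he | he
        · exact ⟨Finset.mem_union_left _ (harcE e he).1, Finset.mem_union_left _ (harcE e he).2⟩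
        · exact ⟨Finset.mem_union_right _ (harcF e he).1, Finset.mem_union_right _ (harcF e he).2⟩
    have hheadU : ∀ e ∈ Eu, e.2 ≠ a := by
      intro e he
      rcases Finset.mem_insert.mp he with rfl | he
      · exact fun hh => hanot (hh ▸ hb)
      · rcases Finset.mem_union.mp he with he | he
        · exact hheadE e he
        · exact fun hh => hanot (hh ▸ (harcF e he).2)
    -- paths starting in t stay in t and use only F
    have keyT : ∀ x ∈ t, ∀ y, Relation.ReflTransGen (fun p q => (p, q) ∈ Eu) x y →
        y ∈ t ∧ Relation.ReflTransGen (fun p q => (p, q) ∈ F) x y := by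
      intro x hx y hr
      induction hr with
      | refl => exact ⟨hx, Relation.ReflTransGen.refl⟩
      | @tail c d hcd hstep ih =>
        obtain ⟨hc, hpath⟩ := ih
        rcases Finset.mem_insert.mp hstep with heq | hstep
        · exfalso; exact hanot ((Prod.mk.injEq _ _ _ _ ▸ heq).1 ▸ hc)
        · rcases Finset.mem_union.mp hstep with hstep | hstep
          · exact absurd ((harcE _ hstep).1) (fun hmem => Finset.disjoint_left.mp hdisj hmem hc)
          · exact ⟨(harcF _ hstep).2, hpath.tail hstep⟩
    -- paths starting in s away from a stay in s, avoid a, use only E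
    have keyS : ∀ x ∈ s, x ≠ a → ∀ y, Relation.ReflTransGen (fun p q => (p, q) ∈ Eu) x y →
        y ∈ s ∧ y ≠ a ∧ Relation.ReflTransGen (fun p q => (p, q) ∈ E) x y := by
      intro x hx hxa y hr
      induction hr with
      | refl => exact ⟨hx, hxa, Relation.ReflTransGen.refl⟩
      | @tail c d hcd hstep ih =>
        obtain ⟨hc, hca, hpath⟩ := ih
        rcases Finset.mem_insert.mp hstep with heq | hstep
        · exact absurd ((Prod.mk.injEq _ _ _ _ ▸ heq).1) hca
        · rcases Finset.mem_union.mp hstep with hstep | hstep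
          · exact ⟨(harcE _ hstep).2, hheadE _ hstep, hpath.tail hstep⟩
          · exact absurd ((harcF _ hstep).1) (fun hmem => Finset.disjoint_left.mp hdisj hc hmem)
    have descT : ∀ x ∈ t, desc (s ∪ t) Eu x = desc t F x := by
      intro x hx; ext y
      simp only [mem_desc']
      constructor
      · rintro ⟨-, hr⟩
        obtain ⟨hy, hp⟩ := keyT x hx y hr
        exact ⟨hy, hp⟩
      · rintro ⟨hy, hr⟩
        exact ⟨Finset.mem_union_right _ hy,
          Relation.ReflTransGen.mono (fun p q hpq => Finset.mem_insert.mpr (Or.inr (Finset.mem_union_right _ hpq))) _ _ hr⟩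
    have descS : ∀ x ∈ s, x ≠ a → desc (s ∪ t) Eu x = desc s E x := by
      intro x hx hxa; ext y
      simp only [mem_desc']
      constructor
      · rintro ⟨-, hr⟩
        obtain ⟨hy, -, hp⟩ := keyS x hx hxa y hr
        exact ⟨hy, hp⟩
      · rintro ⟨hy, hr⟩
        exact ⟨Finset.mem_union_left _ hy,
          Relation.ReflTransGen.mono (fun p q hpq => Finset.mem_insert.mpr (Or.inr (Finset.mem_union_left _ hpq))) _ _ hr⟩
    have descA : desc (s ∪ t) Eu a = s ∪ t := by
      ext y
      simp only [mem_desc']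
      constructor
      · rintro ⟨hy, -⟩; exact hy
      · intro hy
        refine ⟨hy, ?_⟩
        rcases Finset.mem_union.mp hy with hy | hy
        · have : y ∈ desc s E a := by rw [hdescE]; exact hy
          exact Relation.ReflTransGen.mono
            (fun p q hpq => Finset.mem_insert.mpr (Or.inr (Finset.mem_union_left _ hpq))) _ _ (mem_desc'.mp this).2
        · have : y ∈ desc t F b := by rw [hdescF]; exact hy
          have hby : Relation.ReflTransGen (fun p q => (p, q) ∈ Eu) b y :=
            Relation.ReflTransGen.mono
              (fun p q hpq => Finset.mem_insert.mpr (Or.inr (Finset.mem_union_right _ hpq))) _ _ (mem_desc'.mp this).2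
          exact Relation.ReflTransGen.trans
            (Relation.ReflTransGen.single (Finset.mem_insert_self _ _)) hby
    have hcardU : (s ∪ t).card = 2 ^ (i + 1) := by
      rw [Finset.card_union_of_disjoint hdisj, hcardE, hcardF]
      ring
    have hgtA : hgt (s ∪ t) Eu a = i + 1 := by
      rw [hgt, descA, hcardU, Nat.log_pow one_lt_two]
    have hgtT : ∀ x ∈ t, hgt (s ∪ t) Eu x = hgt t F x := by
      intro x hx; rw [hgt, descT x hx]; rfl
    have hgtS : ∀ x ∈ s, x ≠ a → hgt (s ∪ t) Eu x = hgt s E x := by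
      intro x hx hxa; rw [hgt, descS x hx hxa]; rfl
    have hgtSbd : ∀ x : V, hgt s E x ≤ i := by
      intro x
      rw [hgt]
      calc Nat.log 2 (desc s E x).card ≤ Nat.log 2 s.card :=
            Nat.log_mono_right (Finset.card_le_card (fun y hy => (mem_desc'.mp hy).1))
        _ = i := by rw [hcardE, Nat.log_pow one_lt_two]
    refine ⟨Finset.mem_union_left _ ha, harcU, hheadU, descA, hcardU, ?_⟩
    intro e he
    rcases Finset.mem_insert.mp he with rfl | he
    · simp only
      rw [hgtA, hgtT b hb, hgt, hdescF, hcardF, Nat.log_pow one_lt_two]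
      omega
    · rcases Finset.mem_union.mp he with he | he
      · have h2 : hgt (s ∪ t) Eu e.2 = hgt s E e.2 :=
          hgtS e.2 (harcE e he).2 (hheadE e he)
        by_cases h1a : e.1 = a
        · rw [h2, h1a, hgtA]
          exact lt_of_le_of_lt (hgtSbd e.2) (Nat.lt_succ_self i)
        · rw [h2, hgtS e.1 (harcE e he).1 h1a]
          exact hltE e he
      · have hne1 : e.1 ≠ a := fun hh => hanot (hh ▸ (harcF e he).1)
        rw [hgtT e.1 (harcF e he).1, hgtT e.2 (harcF e he).2]
        exact hltF e he

/-- Lower bound from `α*`. The linear order on `V` is the strength order `σ` (smaller =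
stronger), `F` is the set of backward ("upset") arcs, `VF` the set of endpoints of arcs
of `F`, every vertex has at most one demand in-neighbor, and (as in the paper's standing
assumption) every feedback vertex either loses a demand match or is the root. The
function `α` is `α*_g`: it equals `g` on `VF`, and on every other vertex it is the least
natural number exceeding `α` of all its demand children and avoiding `α` of every demand
sibling that is weaker or in `VF`. If `H` is a spanning binomial arborescence containing
all demand arcs such that `α_H(x) = α(x)` for every `x` losing a demand match, then
`α_H(v) ≥ α(v)` for every vertex `v`. -/
theorem alpha_star_lower_bound [Fintype V] [LinearOrder V] (beats : V → V → Prop)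
    (hasym : ∀ a b : V, beats a b → ¬ beats b a)
    (htotal : ∀ a b : V, a ≠ b → beats a b ∨ beats b a)
    (m : ℕ) (hcard : Fintype.card V = 2 ^ m)
    (S : Finset (V × V))
    (hone : ∀ u w v : V, (u, v) ∈ S → (w, v) ∈ S → u = w)
    (F : Finset (V × V))
    (hF : ∀ a b : V, beats a b → ((a, b) ∈ F ↔ b < a))
    (VF : Finset V) (hVF : ∀ x : V, x ∈ VF ↔ ∃ e ∈ F, e.1 = x ∨ e.2 = x)
    (g : V → ℕ) (hg : ∀ v ∈ VF, g v ≤ m)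
    (α : V → ℕ)
    (hα1 : ∀ v ∈ VF, α v = g v)
    (hα2 : ∀ v ∉ VF, IsLeast {k : ℕ |
        (∀ w : V, (v, w) ∈ S → α w < k) ∧
        (∀ u w : V, (u, v) ∈ S → (u, w) ∈ S → (v < w ∨ w ∈ VF) → k ≠ α w)} (α v))
    (E : Finset (V × V)) (r : V)
    (hSBA : IsBAE beats Finset.univ E r m)
    (hcontain : ∀ e ∈ S, e ∈ E)
    (hfeedback : ∀ v ∈ VF, (∃ u : V, (u, v) ∈ S) ∨ v = r)
    (hcompact : ∀ x : V, (∃ u : V, (u, x) ∈ S) → hgt Finset.univ E x = α x) :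
    ∀ v : V, α v ≤ hgt Finset.univ E v := by

  obtain ⟨hrmem, harc, hhead, hdesc, hcardE, hlt⟩ := bae_facts hSBA
  have hroot : hgt Finset.univ E r = m := by
    rw [hgt, hdesc, Finset.card_univ, hcard, Nat.log_pow one_lt_two]
  intro v
  by_cases hv : v ∈ VF
  · rcases hfeedback v hv with ⟨u, hu⟩ | rfl
    · exact (hcompact v ⟨u, hu⟩).ge
    · rw [hroot, hα1 v hv]; exact hg v hv
  · obtain ⟨⟨hmem1, hmem2⟩, hlb⟩ := hα2 v hv
    apply hlb
    constructor
    · intro w hw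
      rw [← hcompact w ⟨v, hw⟩]
      exact hlt _ (hcontain _ hw)
    · intro u w huv huw hcond
      rw [hcompact v ⟨u, huv⟩]
      exact hmem2 u w huv huw hcond
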